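/- Let F be a graph of order n with minimum degree δ ≥ 2, and let G_1(F) be the gadget graph defined as follows: vertex set S ∪ S' ∪ {x,y} with |S'| = n - δ - 1, |S ∪ S'| = (n-1)^2 - 1, S ∪ S' inducing a complete graph, and x, y each adjacent to exactly the vertices of S (and x not adjacent to y). Then G_1(F) is F-WORM colorable, and in every F-WORM coloring of G_1(F) the vertices x and y receive the same color, and this color appears on exactly n-2 vertices of S ∪ S'. -/

import Mathlib

open SimpleGraph

/-- A vertex coloring `c` of `G` is an `F`-WORM coloring if no subgraph of `G`
isomorphic to `F` is monochromatic or rainbow. -/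
def IsFWORM {α β : Type*} (F : SimpleGraph α) (G : SimpleGraph β) (c : β → ℕ) : Prop :=
  ∀ f : F →g G, Function.Injective f →
    (∃ u v : α, c (f u) ≠ c (f v)) ∧ (∃ u v : α, u ≠ v ∧ c (f u) = c (f v))

/-- `G` is `F`-WORM colorable if it admits an `F`-WORM coloring. -/
def FWORMColorable {α β : Type*} (F : SimpleGraph α) (G : SimpleGraph β) : Prop :=
  ∃ c : β → ℕ, IsFWORM F G c

/-- The gadget `G₁(F)`: `F` has order `n` and minimum degree `δ ≥ 2`; the host
graph `H` has vertex set `S ∪ S' ∪ {x,y}` with `|S'| = n - δ - 1`,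
`|S ∪ S'| = (n-1)^2 - 1`, `S ∪ S'` inducing a complete graph, and `x, y`
nonadjacent outer vertices each adjacent exactly to the vertices of `S`.
Then `H` is `F`-WORM colorable, and in every `F`-WORM coloring of `H` the
vertices `x` and `y` receive the same color, which appears on exactly `n-2`
inner vertices. -/
theorem stmt8 {α V : Type} [Fintype α] [Fintype V]
    (F : SimpleGraph α) [DecidableRel F.Adj] (n δ : ℕ)
    (hcard : Fintype.card α = n)
    (hδ2 : 2 ≤ δ) (hδlb : ∀ v : α, δ ≤ F.degree v) (hδmin : ∃ v : α, F.degree v = δ)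
    (S S' : Set V) (x y : V)
    (hxy : x ≠ y) (hx : x ∉ S ∪ S') (hy : y ∉ S ∪ S') (hSS' : Disjoint S S')
    (hS' : S'.ncard = n - δ - 1) (hSU : (S ∪ S').ncard = (n - 1) ^ 2 - 1)
    (hall : ∀ v : V, v ∈ S ∪ S' ∪ {x, y})
    (H : SimpleGraph V)
    (hAdj : ∀ u v : V, H.Adj u v ↔ u ≠ v ∧
      ((u ∈ S ∪ S' ∧ v ∈ S ∪ S') ∨
       (u ∈ ({x, y} : Set V) ∧ v ∈ S) ∨ (v ∈ ({x, y} : Set V) ∧ u ∈ S))) :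
    FWORMColorable F H ∧
      ∀ c : V → ℕ, IsFWORM F H c →
        c x = c y ∧ {v ∈ S ∪ S' | c v = c x}.ncard = n - 2 := by
  classical
  obtain ⟨v₀, hv₀deg⟩ := hδmin
  have hδn1 : δ + 1 ≤ n := by
    have h1 := F.degree_lt_card_verts v₀
    have h2 := hδlb v₀
    omega
  have hn3 : 3 ≤ n := by omega
  -- Finset versions
  set SF : Finset V := S.toFinset with hSFdef
  set S'F : Finset V := S'.toFinset with hS'Fdef
  set IF : Finset V := (S ∪ S').toFinset with hIFdef
  have hIFun : IF = SF ∪ S'F := Set.toFinset_union S S'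
  have hmemSF : ∀ v, v ∈ SF ↔ v ∈ S := fun v => Set.mem_toFinset
  have hmemS'F : ∀ v, v ∈ S'F ↔ v ∈ S' := fun v => Set.mem_toFinset
  have hmemIF : ∀ v, v ∈ IF ↔ v ∈ S ∪ S' := fun v => Set.mem_toFinset
  have hdisjF : Disjoint SF S'F := Set.disjoint_toFinset.mpr hSS'
  have hS'Fcard : S'F.card = n - δ - 1 := by
    rw [← Set.ncard_eq_toFinset_card']; exact hS'
  have hIFcard0 : IF.card = (n - 1) ^ 2 - 1 := by
    rw [← Set.ncard_eq_toFinset_card']; exact hSU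
  -- arithmetic identities
  have arith1 : (n - 1) ^ 2 - 1 = (n - 1) * (n - 2) + (n - 2) := by
    obtain ⟨m, rfl⟩ : ∃ m, n = m + 3 := ⟨n - 3, by omega⟩
    have h1 : m + 3 - 1 = m + 2 := by omega
    have h2 : m + 3 - 2 = m + 1 := by omega
    rw [h1, h2]
    have h : (m+2)^2 = ((m+2)*(m+1) + (m+1)) + 1 := by ring
    omega
  have arith2 : (n - 2) * (n - 1) = (n - 1) * (n - 2) := Nat.mul_comm _ _
  have arith3 : (n - 1) * (n - 2) = (n - 3) * (n - 1) + (n - 1) := by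
    obtain ⟨m, rfl⟩ : ∃ m, n = m + 3 := ⟨n - 3, by omega⟩
    have h1 : m + 3 - 1 = m + 2 := by omega
    have h2 : m + 3 - 2 = m + 1 := by omega
    have h3 : m + 3 - 3 = m := by omega
    rw [h1, h2, h3]; ring
  have hIFcard : IF.card = (n - 1) * (n - 2) + (n - 2) := by rw [hIFcard0, arith1]
  have hSFcard : SF.card = (n - 1) * (n - 2) + (δ - 1) := by
    have h1 : SF.card + S'F.card = IF.card := by
      rw [hIFun, Finset.card_union_of_disjoint hdisjF]
    omega
  have hxS : x ∉ S := fun h => hx (Or.inl h)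
  have hyS : y ∉ S := fun h => hy (Or.inl h)
  -- E1 : copy of F inside any n inner vertices
  have E1 : ∀ T : Finset V, (∀ v ∈ T, v ∈ S ∪ S') → n ≤ T.card →
      ∃ f : F →g H, Function.Injective f ∧ ∀ u, f u ∈ T := by
    intro T hT hnT
    have hcle : Fintype.card α ≤ Fintype.card T := by rw [Fintype.card_coe]; omega
    obtain ⟨ι⟩ := Function.Embedding.nonempty_of_card_le hcle
    have hinj : Function.Injective (fun u => (ι u : V)) := by
      intro u w h
      exact ι.injective (Subtype.ext h)
    refine ⟨⟨fun u => (ι u : V), ?_⟩, hinj, fun u => (ι u).2⟩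
    intro u w huw
    rw [hAdj]
    exact ⟨fun h => F.ne_of_adj huw (hinj h), Or.inl ⟨hT _ (ι u).2, hT _ (ι w).2⟩⟩
  -- E2 : copy of F through z ∈ {x,y}
  have E2 : ∀ z : V, (z = x ∨ z = y) → ∀ A B : Finset V, (∀ v ∈ A, v ∈ S) →
      (∀ v ∈ B, v ∈ S ∪ S') → Disjoint A B → A.card = δ → B.card = n - 1 - δ →
      ∃ f : F →g H, Function.Injective f ∧ f v₀ = z ∧ ∀ u, u ≠ v₀ → f u ∈ A ∪ B := by
    intro z hz A B hA hB hAB hAc hBc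
    have hzI : z ∉ S ∪ S' := by rcases hz with rfl | rfl; exacts [hx, hy]
    have hzxy : z ∈ ({x, y} : Set V) := by
      rcases hz with rfl | rfl
      · exact Set.mem_insert _ _
      · exact Set.mem_insert_of_mem _ rfl
    set N : Finset α := F.neighborFinset v₀ with hN
    have hNc : N.card = δ := by rw [hN, F.card_neighborFinset_eq_degree]; exact hv₀deg
    have hv₀N : v₀ ∉ N := by simp [hN]
    set R : Finset α := Finset.univ \ insert v₀ N with hR
    have hRc : R.card = n - 1 - δ := by
      rw [hR, Finset.card_sdiff_of_subset (Finset.subset_univ _), Finset.card_insert_of_notMem hv₀N,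
        hNc, Finset.card_univ, hcard]
      omega
    have e₁ : ↥N ≃ ↥A := Fintype.equivOfCardEq (by simp [hNc, hAc])
    have e₂ : ↥R ≃ ↥B := Fintype.equivOfCardEq (by simp [hRc, hBc])
    have hmemR : ∀ u : α, u ≠ v₀ → u ∉ N → u ∈ R := by
      intro u h1 h2; rw [hR]; simp [h1, h2]
    set g : α → V := fun u =>
      if h1 : u = v₀ then z
      else if h2 : u ∈ N then (e₁ ⟨u, h2⟩ : V)
      else (e₂ ⟨u, hmemR u h1 h2⟩ : V) with hg
    have hgv₀ : g v₀ = z := by simp [hg]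
    have hgN : ∀ u (h1 : u ≠ v₀) (h2 : u ∈ N), g u = (e₁ ⟨u, h2⟩ : V) := by
      intro u h1 h2; simp [hg, h1, h2]
    have hgR : ∀ u (h1 : u ≠ v₀) (h2 : u ∉ N), g u = (e₂ ⟨u, hmemR u h1 h2⟩ : V) := by
      intro u h1 h2; simp [hg, h1, h2]
    have hgAB : ∀ u, u ≠ v₀ → g u ∈ A ∪ B := by
      intro u h1
      by_cases h2 : u ∈ N
      · rw [hgN u h1 h2]; exact Finset.mem_union_left _ (e₁ ⟨u, h2⟩).2
      · rw [hgR u h1 h2]; exact Finset.mem_union_right _ (e₂ ⟨u, hmemR u h1 h2⟩).2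
    have hzAB : z ∉ A ∪ B := by
      intro h
      rcases Finset.mem_union.mp h with h | h
      · exact hzI (Or.inl (hA _ h))
      · exact hzI (hB _ h)
    have hginj : Function.Injective g := by
      intro u w h
      by_cases h1 : u = v₀ <;> by_cases h1' : w = v₀
      · rw [h1, h1']
      · rw [h1, hgv₀] at h; exact absurd (h ▸ hgAB w h1') hzAB
      · rw [h1', hgv₀] at h; exact absurd (h ▸ hgAB u h1) hzAB
      · by_cases h2 : u ∈ N <;> by_cases h2' : w ∈ N
        · rw [hgN u h1 h2, hgN w h1' h2'] at h
          exact congrArg Subtype.val (e₁.injective (Subtype.ext h))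
        · rw [hgN u h1 h2, hgR w h1' h2'] at h
          have hw : (e₂ ⟨w, hmemR w h1' h2'⟩ : V) ∈ B := (e₂ _).2
          rw [← h] at hw
          exact ((Finset.disjoint_left.mp hAB (e₁ ⟨u, h2⟩).2) hw).elim
        · rw [hgR u h1 h2, hgN w h1' h2'] at h
          have hw : (e₁ ⟨w, h2'⟩ : V) ∈ A := (e₁ _).2
          rw [← h] at hw
          exact ((Finset.disjoint_right.mp hAB (e₂ ⟨u, hmemR u h1 h2⟩).2) hw).elim
        · rw [hgR u h1 h2, hgR w h1' h2'] at h
          exact congrArg Subtype.val (e₂.injective (Subtype.ext h))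
    have hhom : ∀ u w, F.Adj u w → H.Adj (g u) (g w) := by
      have adjz : ∀ w, w ≠ v₀ → w ∈ N → H.Adj z (g w) := by
        intro w h1 h2
        have hgwS : g w ∈ S := by rw [hgN w h1 h2]; exact hA _ (e₁ ⟨w, h2⟩).2
        rw [hAdj]
        exact ⟨fun h => hzI (Or.inl (h ▸ hgwS)), Or.inr (Or.inl ⟨hzxy, hgwS⟩)⟩
      intro u w huw
      by_cases h1 : u = v₀
      · subst h1
        have h2 : w ∈ N := by rw [hN]; exact F.mem_neighborFinset _ _ |>.mpr huw
        have h1' : w ≠ u := fun h => F.loopless.irrefl _ (h ▸ huw)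
        rw [hgv₀]
        exact adjz w h1' h2
      · by_cases h1' : w = v₀
        · subst h1'
          have h2 : u ∈ N := by rw [hN]; exact F.mem_neighborFinset _ _ |>.mpr huw.symm
          rw [hgv₀]
          exact (adjz u h1 h2).symm
        · have hu := hgAB u h1
          have hw := hgAB w h1'
          have hmem : ∀ v ∈ A ∪ B, v ∈ S ∪ S' := by
            intro v hv
            rcases Finset.mem_union.mp hv with hv | hv
            · exact Or.inl (hA _ hv)
            · exact hB _ hv
          rw [hAdj]
          exact ⟨fun h => F.ne_of_adj huw (hginj h), Or.inl ⟨hmem _ hu, hmem _ hw⟩⟩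
    exact ⟨⟨g, fun h => hhom _ _ h⟩, hginj, hgv₀, hgAB⟩

  -- helper: representative choosing functions
  have hrepget : ∀ (c : V → ℕ) (W : Finset V), ∃ r : ℕ → V, ∀ a ∈ W.image c, r a ∈ W ∧ c (r a) = a := by
    intro c W
    refine ⟨fun a => if h : ∃ v, v ∈ W ∧ c v = a then h.choose else x, ?_⟩
    intro a ha
    have h : ∃ v, v ∈ W ∧ c v = a := by simpa using Finset.mem_image.mp ha
    simp only [dif_pos h]
    exact h.choose_spec
  have KEY : ∀ c : V → ℕ, IsFWORM F H c →
      (∀ z : V, (z = x ∨ z = y) →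
        c z ∈ IF.image c ∧ (IF.filter (fun v => c v = c z)).card = n - 2) ∧
      (∀ a b : ℕ, a ∈ IF.image c → b ∈ IF.image c →
        (IF.filter (fun v => c v = a)).card = n - 2 →
        (IF.filter (fun v => c v = b)).card = n - 2 → a = b) := by
    intro c hc
    have L1 : ∀ a : ℕ, (IF.filter (fun v => c v = a)).card ≤ n - 1 := by
      intro a
      by_contra h
      push_neg at h
      obtain ⟨T, hTsub, hTcard⟩ := Finset.exists_subset_card_eq (show n ≤ (IF.filter (fun v => c v = a)).card by omega)
      obtain ⟨f, hfinj, hfT⟩ := E1 T (fun v hv => (hmemIF v).mp (Finset.filter_subset _ _ (hTsub hv))) (by omega)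
      obtain ⟨⟨u, v, hne⟩, -⟩ := hc f hfinj
      have h1 : c (f u) = a := (Finset.mem_filter.mp (hTsub (hfT u))).2
      have h2 : c (f v) = a := (Finset.mem_filter.mp (hTsub (hfT v))).2
      exact hne (h1.trans h2.symm)
    obtain ⟨repI, hrepI⟩ := hrepget c IF
    obtain ⟨repS, hrepS⟩ := hrepget c SF
    have L2 : (IF.image c).card ≤ n - 1 := by
      by_contra h
      push_neg at h
      obtain ⟨D, hD, hDcard⟩ := Finset.exists_subset_card_eq (show n ≤ (IF.image c).card by omega)
      have hinjOn : Set.InjOn repI D := by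
        intro a ha b hb hab
        have h1 := (hrepI a (hD ha)).2
        have h2 := (hrepI b (hD hb)).2
        rw [← h1, ← h2, hab]
      have hTsub : ∀ v ∈ D.image repI, v ∈ IF := by
        intro v hv
        obtain ⟨a, ha, rfl⟩ := Finset.mem_image.mp hv
        exact (hrepI a (hD ha)).1
      have hTcard : (D.image repI).card = n := by rw [Finset.card_image_of_injOn hinjOn, hDcard]
      obtain ⟨f, hfinj, hfT⟩ := E1 (D.image repI) (fun v hv => (hmemIF v).mp (hTsub v hv)) hTcard.ge
      obtain ⟨-, u, v, hne, heq⟩ := hc f hfinj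
      obtain ⟨a, ha, hfa⟩ := Finset.mem_image.mp (hfT u)
      obtain ⟨b, hb, hfb⟩ := Finset.mem_image.mp (hfT v)
      have h1 : c (f u) = a := by rw [← hfa]; exact (hrepI a (hD ha)).2
      have h2 : c (f v) = b := by rw [← hfb]; exact (hrepI b (hD hb)).2
      have hab : a = b := by rw [← h1, ← h2, heq]
      exact hne (hfinj (by rw [← hfa, ← hfb, hab]))
    have hsum : IF.card = ∑ a ∈ IF.image c, (IF.filter (fun v => c v = a)).card :=
      Finset.card_eq_sum_card_fiberwise (fun v hv => Finset.mem_image_of_mem c hv)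
    have hub0 : ∑ a ∈ IF.image c, (IF.filter (fun v => c v = a)).card ≤ (IF.image c).card * (n - 1) := by
      calc ∑ a ∈ IF.image c, (IF.filter (fun v => c v = a)).card
          ≤ (IF.image c).card • (n - 1) := Finset.sum_le_card_nsmul _ _ _ (fun a _ => L1 a)
        _ = (IF.image c).card * (n - 1) := by rw [smul_eq_mul]
    have L3 : (IF.image c).card = n - 1 := by
      by_contra h
      have hk : (IF.image c).card ≤ n - 2 := by omega
      have h2 : (IF.image c).card * (n - 1) ≤ (n - 2) * (n - 1) := Nat.mul_le_mul_right _ hk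
      rw [arith2] at h2
      omega
    have L4 : ∀ a ∈ IF.image c, n - 2 ≤ (IF.filter (fun v => c v = a)).card := by
      intro a ha
      have hsplit := Finset.add_sum_erase (IF.image c) (fun a => (IF.filter (fun v => c v = a)).card) ha
      beta_reduce at hsplit
      have herase : ((IF.image c).erase a).card = n - 2 := by
        rw [Finset.card_erase_of_mem ha, L3]
        omega
      have hub : ∑ b ∈ (IF.image c).erase a, (IF.filter (fun v => c v = b)).card ≤ (n - 2) * (n - 1) := by
        calc ∑ b ∈ (IF.image c).erase a, (IF.filter (fun v => c v = b)).card
            ≤ ((IF.image c).erase a).card • (n - 1) := Finset.sum_le_card_nsmul _ _ _ (fun b _ => L1 b)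
          _ = (n - 2) * (n - 1) := by rw [herase, smul_eq_mul]
      rw [arith2] at hub
      omega
    have L5 : SF.image c = IF.image c := by
      have hsub : SF.image c ⊆ IF.image c :=
        Finset.image_subset_image (by rw [hIFun]; exact Finset.subset_union_left)
      have hsumS : SF.card = ∑ a ∈ SF.image c, (SF.filter (fun v => c v = a)).card :=
        Finset.card_eq_sum_card_fiberwise (fun v hv => Finset.mem_image_of_mem c hv)
      have hfibS : ∀ a : ℕ, (SF.filter (fun v => c v = a)).card ≤ n - 1 := by
        intro a
        refine le_trans (Finset.card_le_card (Finset.filter_subset_filter _ ?_)) (L1 a)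
        rw [hIFun]; exact Finset.subset_union_left
      have hubS : SF.card ≤ (SF.image c).card * (n - 1) := by
        rw [hsumS]
        calc ∑ a ∈ SF.image c, (SF.filter (fun v => c v = a)).card
            ≤ (SF.image c).card • (n - 1) := Finset.sum_le_card_nsmul _ _ _ (fun a _ => hfibS a)
          _ = (SF.image c).card * (n - 1) := by rw [smul_eq_mul]
      have hge : n - 1 ≤ (SF.image c).card := by
        by_contra h
        push_neg at h
        have hk : (SF.image c).card ≤ n - 2 := by omega
        have h2 : (SF.image c).card * (n - 1) ≤ (n - 2) * (n - 1) := Nat.mul_le_mul_right _ hk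
        rw [arith2] at h2
        omega
      exact Finset.eq_of_subset_of_card_le hsub (by rw [L3]; exact hge)
    have hinjOnS : Set.InjOn c ((SF.image c).image repS) := by
      intro s hs t ht hst
      obtain ⟨a, ha, rfl⟩ := Finset.mem_image.mp (show s ∈ (SF.image c).image repS from by simpa using hs)
      obtain ⟨b, hb, rfl⟩ := Finset.mem_image.mp (show t ∈ (SF.image c).image repS from by simpa using ht)
      rw [(hrepS a ha).2, (hrepS b hb).2] at hst
      rw [hst]
    have hTScard : ((SF.image c).image repS).card = n - 1 := by
      have hio : Set.InjOn repS (SF.image c) := by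
        intro a ha b hb hab
        have ha' : a ∈ SF.image c := by simpa using ha
        have hb' : b ∈ SF.image c := by simpa using hb
        rw [← (hrepS a ha').2, ← (hrepS b hb').2, hab]
      rw [Finset.card_image_of_injOn hio, L5, L3]
    have hTSsub : ∀ v ∈ (SF.image c).image repS, v ∈ SF := by
      intro v hv
      obtain ⟨a, ha, rfl⟩ := Finset.mem_image.mp hv
      exact (hrepS a ha).1
    have Lz : ∀ z : V, (z = x ∨ z = y) → c z ∈ IF.image c := by
      intro z hz
      by_contra hnot
      obtain ⟨A, hAsub, hAcard⟩ := Finset.exists_subset_card_eq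
        (show δ ≤ ((SF.image c).image repS).card by rw [hTScard]; omega)
      have hBcard : (((SF.image c).image repS) \ A).card = n - 1 - δ := by
        rw [Finset.card_sdiff_of_subset hAsub, hTScard, hAcard]
      obtain ⟨f, hfinj, hfv₀, hfAB⟩ := E2 z hz A (((SF.image c).image repS) \ A)
        (fun v hv => (hmemSF v).mp (hTSsub v (hAsub hv)))
        (fun v hv => Or.inl ((hmemSF v).mp (hTSsub v (Finset.sdiff_subset hv))))
        Finset.disjoint_sdiff hAcard hBcard
      obtain ⟨-, u, v, hne, heq⟩ := hc f hfinj
      have himg : ∀ w : α, f w = z ∨ f w ∈ (SF.image c).image repS := by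
        intro w
        by_cases hw : w = v₀
        · subst hw; exact Or.inl hfv₀
        · right
          have := hfAB w hw
          rwa [Finset.union_sdiff_of_subset hAsub] at this
      rcases himg u with hu | hu <;> rcases himg v with hv | hv
      · exact hne (hfinj (hu.trans hv.symm))
      · refine hnot ?_
        rw [show c z = c (f v) by rw [← hu, heq]]
        rw [← L5]
        exact Finset.mem_image_of_mem c (hTSsub _ hv)
      · refine hnot ?_
        rw [show c z = c (f u) by rw [← hv, ← heq]]
        rw [← L5]
        exact Finset.mem_image_of_mem c (hTSsub _ hu)
      · exact hne (hfinj (hinjOnS hu hv heq))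
    have Lfib : ∀ z : V, (z = x ∨ z = y) → (IF.filter (fun v => c v = c z)).card = n - 2 := by
      intro z hz
      have hmem := Lz z hz
      have hub : (IF.filter (fun v => c v = c z)).card ≤ n - 2 := by
        by_contra hcon
        push_neg at hcon
        have hA0card : n - 1 ≤ (IF.filter (fun v => c v = c z)).card := by
          have := L1 (c z); omega
        have huni : (IF.filter (fun v => c v = c z)) ∩ SF ∪ (IF.filter (fun v => c v = c z)) ∩ S'F = (IF.filter (fun v => c v = c z)) := by
          rw [← Finset.inter_union_distrib_left, ← hIFun]
          exact Finset.inter_eq_left.mpr (Finset.filter_subset _ _)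
        have hsplit : (IF.filter (fun v => c v = c z)).card = ((IF.filter (fun v => c v = c z)) ∩ SF).card + ((IF.filter (fun v => c v = c z)) ∩ S'F).card := by
          rw [← Finset.card_union_of_disjoint (hdisjF.mono Finset.inter_subset_right Finset.inter_subset_right), huni]
        have h1 : ((IF.filter (fun v => c v = c z)) ∩ S'F).card ≤ n - δ - 1 := by
          calc ((IF.filter (fun v => c v = c z)) ∩ S'F).card ≤ S'F.card := Finset.card_le_card Finset.inter_subset_right
            _ = n - δ - 1 := hS'Fcard
        have hAS : δ ≤ ((IF.filter (fun v => c v = c z)) ∩ SF).card := by omega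
        obtain ⟨A, hAsub, hAcard⟩ := Finset.exists_subset_card_eq hAS
        have hAsubA0 : A ⊆ IF.filter (fun v => c v = c z) := hAsub.trans Finset.inter_subset_left
        obtain ⟨B, hBsub, hBcard⟩ := Finset.exists_subset_card_eq
          (show n - 1 - δ ≤ ((IF.filter (fun v => c v = c z)) \ A).card by
            rw [Finset.card_sdiff_of_subset hAsubA0, hAcard]; omega)
        obtain ⟨f, hfinj, hfv₀, hfAB⟩ := E2 z hz A B
          (fun v hv => (hmemSF v).mp (Finset.inter_subset_right (hAsub hv)))
          (fun v hv => (hmemIF v).mp (Finset.filter_subset _ _ (Finset.sdiff_subset (hBsub hv))))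
          (Finset.disjoint_sdiff.mono_right hBsub) hAcard hBcard
        obtain ⟨⟨u, v, hne⟩, -⟩ := hc f hfinj
        have hval : ∀ w : α, c (f w) = c z := by
          intro w
          by_cases hw : w = v₀
          · subst hw; rw [hfv₀]
          · have hmem' := hfAB w hw
            have : f w ∈ IF.filter (fun v => c v = c z) := by
              rcases Finset.mem_union.mp hmem' with h | h
              · exact hAsubA0 h
              · exact Finset.sdiff_subset (hBsub h)
            exact (Finset.mem_filter.mp this).2
        exact hne ((hval u).trans (hval v).symm)
      have hlb := L4 _ hmem
      omega
    refine ⟨fun z hz => ⟨Lz z hz, Lfib z hz⟩, ?_⟩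
    intro a b ha hb hfa hfb
    by_contra hne
    have hb' : b ∈ (IF.image c).erase a := Finset.mem_erase.mpr ⟨fun h => hne h.symm, hb⟩
    have h1 := Finset.add_sum_erase (IF.image c) (fun a => (IF.filter (fun v => c v = a)).card) ha
    have h2 := Finset.add_sum_erase ((IF.image c).erase a) (fun a => (IF.filter (fun v => c v = a)).card) hb'
    beta_reduce at h1 h2
    have hcard2 : (((IF.image c).erase a).erase b).card = n - 3 := by
      rw [Finset.card_erase_of_mem hb', Finset.card_erase_of_mem ha, L3]
      omega
    have hub : ∑ d ∈ ((IF.image c).erase a).erase b, (IF.filter (fun v => c v = d)).card ≤ (n - 3) * (n - 1) := by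
      calc ∑ d ∈ ((IF.image c).erase a).erase b, (IF.filter (fun v => c v = d)).card
          ≤ (((IF.image c).erase a).erase b).card • (n - 1) := Finset.sum_le_card_nsmul _ _ _ (fun d _ => L1 d)
        _ = (n - 3) * (n - 1) := by rw [hcard2, smul_eq_mul]
    omega
  constructor
  · -- colorability
    obtain ⟨T₀, hT₀sub, hT₀card⟩ := Finset.exists_subset_card_eq
      (show δ - 1 ≤ SF.card by rw [hSFcard]; omega)
    have hdisjB : Disjoint S'F T₀ := hdisjF.symm.mono_right hT₀sub
    have hBcard : (S'F ∪ T₀).card = n - 2 := by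
      rw [Finset.card_union_of_disjoint hdisjB, hS'Fcard, hT₀card]; omega
    have hBsubIF : S'F ∪ T₀ ⊆ IF := by
      rw [hIFun]
      exact Finset.union_subset Finset.subset_union_right (hT₀sub.trans Finset.subset_union_left)
    set K : Finset V := IF \ (S'F ∪ T₀) with hKdef
    have hKcard : K.card = (n - 1) * (n - 2) := by
      rw [hKdef, Finset.card_sdiff_of_subset hBsubIF, hIFcard, hBcard]; omega
    set eK := K.equivFin with heKdef
    set c : V → ℕ := fun v => if h : v ∈ K then ((eK ⟨v, h⟩ : ℕ) / (n - 1)) + 1 else 0 with hcdef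
    have hc0 : ∀ v, c v = 0 ↔ v ∉ K := by
      intro v; by_cases h : v ∈ K <;> simp [hcdef, h]
    have hcbound : ∀ v, c v ≤ n - 2 := by
      intro v; by_cases h : v ∈ K
      · simp only [hcdef, dif_pos h]
        have hj : (eK ⟨v, h⟩ : ℕ) < (n - 1) * (n - 2) := by
          rw [← hKcard]; exact (eK ⟨v, h⟩).isLt
        have hd : (eK ⟨v, h⟩ : ℕ) / (n - 1) < n - 2 := by
          rw [Nat.div_lt_iff_lt_mul (by omega : 0 < n - 1), arith2]
          exact hj
        omega
      · simp [hcdef, h]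
    refine ⟨c, ?_⟩
    intro f hfinj
    constructor
    · -- not monochromatic
      by_contra hmono
      push_neg at hmono
      by_cases ha : c (f v₀) = 0
      · -- color 0 : class is B ∪ {x,y}, forces x in image, too few neighbors
        have hxB : x ∉ S'F ∪ T₀ := fun h => hx ((hmemIF x).mp (hBsubIF h))
        have hyB : y ∉ S'F ∪ T₀ := fun h => hy ((hmemIF y).mp (hBsubIF h))
        have hZcard : (insert x (insert y (S'F ∪ T₀))).card = n := by
          rw [Finset.card_insert_of_notMem (by simp [hxy, hxB]),
            Finset.card_insert_of_notMem hyB, hBcard]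
          omega
        have himg : ∀ u : α, f u ∈ insert x (insert y (S'F ∪ T₀)) := by
          intro u
          have h0 : c (f u) = 0 := (hmono u v₀).trans ha
          have hKu : f u ∉ K := (hc0 _).mp h0
          rcases hall (f u) with h | h
          · have h1 : f u ∈ IF := (hmemIF _).mpr h
            have h2 : f u ∈ S'F ∪ T₀ := by
              by_contra hcon
              exact hKu (by rw [hKdef]; exact Finset.mem_sdiff.mpr ⟨h1, hcon⟩)
            exact Finset.mem_insert_of_mem (Finset.mem_insert_of_mem h2)
          · rcases h with h | h
            · exact h ▸ Finset.mem_insert_self _ _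
            · rw [Set.mem_singleton_iff] at h
              exact h ▸ Finset.mem_insert_of_mem (Finset.mem_insert_self _ _)
        have himgeq : Finset.univ.image f = insert x (insert y (S'F ∪ T₀)) := by
          apply Finset.eq_of_subset_of_card_le
          · intro v hv
            obtain ⟨u, -, rfl⟩ := Finset.mem_image.mp hv
            exact himg u
          · rw [hZcard, Finset.card_image_of_injective _ hfinj, Finset.card_univ, hcard]
        have hxmem : x ∈ Finset.univ.image f := by
          rw [himgeq]; exact Finset.mem_insert_self _ _
        obtain ⟨u₀, -, hu₀⟩ := Finset.mem_image.mp hxmem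
        have hmap : ∀ w ∈ F.neighborFinset u₀, f w ∈ T₀ := by
          intro w hw
          have hadjF : F.Adj u₀ w := (F.mem_neighborFinset _ _).mp hw
          have hadjH : H.Adj x (f w) := hu₀ ▸ f.map_adj hadjF
          rw [hAdj x (f w)] at hadjH
          obtain ⟨hne', hcases⟩ := hadjH
          have hfwS : f w ∈ S := by
            rcases hcases with ⟨h1, -⟩ | ⟨-, h2⟩ | ⟨-, h2⟩
            · exact absurd h1 hx
            · exact h2
            · exact absurd h2 hxS
          have hZ := himg w
          rcases Finset.mem_insert.mp hZ with h | h
          · exact absurd (h ▸ hfwS) hxS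
          rcases Finset.mem_insert.mp h with h | h
          · exact absurd (h ▸ hfwS) hyS
          rcases Finset.mem_union.mp h with h | h
          · exact absurd ((hmemS'F _).mp h) (Set.disjoint_left.mp hSS' hfwS)
          · exact h
        have h1 := hδlb u₀
        have h2 : (F.neighborFinset u₀).card ≤ T₀.card :=
          Finset.card_le_card_of_injOn f hmap (fun a _ b _ h => hfinj h)
        rw [F.card_neighborFinset_eq_degree, hT₀card] at h2
        omega
      · -- nonzero color : class has at most n-1 elements
        have hKu : ∀ u : α, f u ∈ K := by
          intro u
          by_contra hKu
          exact ha ((hmono v₀ u).trans ((hc0 _).mpr hKu))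
        have hdiv : ∀ u : α, (eK ⟨f u, hKu u⟩ : ℕ) / (n - 1) = c (f v₀) - 1 := by
          intro u
          have h1 : c (f u) = c (f v₀) := hmono u v₀
          have h2 : c (f u) = (eK ⟨f u, hKu u⟩ : ℕ) / (n - 1) + 1 := by
            simp [hcdef, hKu u]
          omega
        have hmapsTo : ∀ u : α, (eK ⟨f u, hKu u⟩ : ℕ) ∈
            Finset.Ico ((c (f v₀) - 1) * (n - 1)) (c (f v₀) * (n - 1)) := by
          intro u
          rw [Finset.mem_Ico]
          have hd := hdiv u
          constructor
          · exact (Nat.le_div_iff_mul_le (by omega : 0 < n - 1)).mp (le_of_eq hd.symm)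
          · exact (Nat.div_lt_iff_lt_mul (by omega : 0 < n - 1)).mp (by omega)
        have hinj2 : Function.Injective (fun u : α => (eK ⟨f u, hKu u⟩ : ℕ)) := by
          intro u v h
          have h' : eK ⟨f u, hKu u⟩ = eK ⟨f v, hKu v⟩ := Fin.val_injective h
          exact hfinj (congrArg Subtype.val (eK.injective h'))
        have hle : n ≤ (Finset.Ico ((c (f v₀) - 1) * (n - 1)) (c (f v₀) * (n - 1))).card := by
          calc n = Fintype.card α := hcard.symm
            _ = Finset.univ.card := Finset.card_univ.symm
            _ ≤ _ := Finset.card_le_card_of_injOn _ (fun u _ => hmapsTo u) (fun u _ v _ h => hinj2 h)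
        rw [Nat.card_Ico] at hle
        have hsm : c (f v₀) * (n - 1) = (c (f v₀) - 1) * (n - 1) + (n - 1) := by
          obtain ⟨t, ht⟩ : ∃ t, c (f v₀) = t + 1 := ⟨c (f v₀) - 1, by omega⟩
          rw [ht]
          have h2 : t + 1 - 1 = t := rfl
          rw [h2]; ring
        omega
    · -- not rainbow
      by_contra hrb
      push_neg at hrb
      have hcfinj : Function.Injective (fun u : α => c (f u)) := by
        intro u v h
        by_contra hne
        exact hrb u v hne h
      have hle : Fintype.card α ≤ Fintype.card (Fin (n - 1)) :=
        Fintype.card_le_of_injective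
          (fun u => (⟨c (f u), by have := hcbound (f u); omega⟩ : Fin (n - 1)))
          (fun u v h => hcfinj (congrArg Fin.val h))
      rw [Fintype.card_fin, hcard] at hle
      omega
  · intro c hc
    obtain ⟨hz, huniq⟩ := KEY c hc
    obtain ⟨hxmem, hxcard⟩ := hz x (Or.inl rfl)
    obtain ⟨hymem, hycard⟩ := hz y (Or.inr rfl)
    have hcxy : c x = c y := huniq _ _ hxmem hymem hxcard hycard
    refine ⟨hcxy, ?_⟩
    rw [Set.ncard_eq_toFinset_card']
    have : {v ∈ S ∪ S' | c v = c x}.toFinset = IF.filter (fun v => c v = c x) := by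
      ext v
      simp only [Set.mem_toFinset, Set.mem_setOf_eq, Finset.mem_filter, hmemIF]
    rw [this, hxcard]
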